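/- For every 3DSMI instance of dimension n with n ≤ 2, there exists a weakly stable matching. -/
import Mathlib


/-- A 3DSMI instance of dimension `n`: a directed graph on a vertex set `V`
partitioned into three genders (men, women, dogs), each of size `n`, where every
edge goes from gender `g` to gender `g+1`, together with a rank function such that
for every vertex of out-degree `k` the ranks of its outgoing edges are exactly
`1, …, k`. -/
structure TDSMI (V : Type) [Fintype V] [DecidableEq V] (n : ℕ) where
  E : V → V → Bool
  r : V → V → ℕ
  gender : V → Fin 3
  gender_card : ∀ g : Fin 3, (Finset.univ.filter fun v => gender v = g).card = n
  edge_gender : ∀ v w : V, E v w → gender w = gender v + 1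
  rank_bij : ∀ v : V,
    (Finset.univ.filter fun w => E v w).image (r v)
      = Finset.Icc 1 (Finset.univ.filter fun w => E v w).card

namespace TDSMI

variable {V : Type} [Fintype V] [DecidableEq V] {n : ℕ}

/-- A family: a directed 3-cycle `a → b → c → a`. -/
def IsFamily (G : TDSMI V n) (a b c : V) : Prop :=
  G.E a b ∧ G.E b c ∧ G.E c a

/-- `v` is one of the vertices of the triple `t`. -/
def MemTriple (v : V) (t : V × V × V) : Prop :=
  v = t.1 ∨ v = t.2.1 ∨ v = t.2.2

/-- A matching: a set of pairwise vertex-disjoint families. -/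
def IsMatching (G : TDSMI V n) (F : Finset (V × V × V)) : Prop :=
  (∀ t ∈ F, G.IsFamily t.1 t.2.1 t.2.2) ∧
  ∀ t ∈ F, ∀ t' ∈ F, t ≠ t' → ∀ v : V, ¬ (MemTriple v t ∧ MemTriple v t')

/-- `w` is the vertex that the edge leaving `v` inside its family of `F` points to. -/
def MatchedTo (F : Finset (V × V × V)) (v w : V) : Prop :=
  ∃ t ∈ F, (t.1 = v ∧ t.2.1 = w) ∨ (t.2.1 = v ∧ t.2.2 = w) ∨ (t.2.2 = v ∧ t.1 = w)

/-- `r(v,w) < R_F(v)`: the rank of the edge `v → w` is smaller than the rank of `v` in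
the matching `F` (if `v` is in no family of `F`, its rank is `+∞` and this holds
vacuously). -/
def Prefers (G : TDSMI V n) (F : Finset (V × V × V)) (v w : V) : Prop :=
  ∀ u : V, MatchedTo F v u → G.r v w < G.r v u

/-- The directed 3-cycle `(a, b, c)` blocks the matching `F`. -/
def Blocks (G : TDSMI V n) (F : Finset (V × V × V)) (a b c : V) : Prop :=
  G.IsFamily a b c ∧ G.Prefers F a b ∧ G.Prefers F b c ∧ G.Prefers F c a

/-- A matching is weakly stable if no directed 3-cycle blocks it. -/
def WeaklyStable (G : TDSMI V n) (F : Finset (V × V × V)) : Prop :=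
  ∀ a b c : V, ¬ G.Blocks F a b c

end TDSMI

set_option linter.unusedSectionVars false

namespace TDSMI

variable {V : Type} [Fintype V] [DecidableEq V] {n : ℕ}

/-! ### Generic helper lemmas -/

private lemma fin3_cases (h g : Fin 3) : h = g ∨ h = g + 1 ∨ h = g + 1 + 1 := by
  revert h g; decide

private lemma fin3_add3 (g : Fin 3) : g + 1 + 1 + 1 = g := by revert g; decide

private lemma fin3_ne1 (g : Fin 3) : g + 1 ≠ g := by revert g; decide

private lemma fin3_ne2 (g : Fin 3) : g + 1 + 1 ≠ g := by revert g; decide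

lemma IsFamily.rot {G : TDSMI V n} {a b c : V} (h : G.IsFamily a b c) :
    G.IsFamily b c a := ⟨h.2.1, h.2.2, h.1⟩

lemma isMatching_empty (G : TDSMI V n) : G.IsMatching (∅ : Finset (V × V × V)) := by
  constructor
  · intro t ht; exact absurd ht (Finset.notMem_empty t)
  · intro t ht; exact absurd ht (Finset.notMem_empty t)

lemma stable_of_no_family (G : TDSMI V n) (h : ¬ ∃ a b c, G.IsFamily a b c) :
    G.IsMatching (∅ : Finset (V × V × V)) ∧ G.WeaklyStable (∅ : Finset (V × V × V)) := by
  refine ⟨G.isMatching_empty, ?_⟩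
  intro a b c hb
  exact h ⟨a, b, c, hb.1⟩

lemma isMatching_singleton {G : TDSMI V n} {a b c : V} (h : G.IsFamily a b c) :
    G.IsMatching ({(a, b, c)} : Finset (V × V × V)) := by
  constructor
  · intro t ht; rw [Finset.mem_singleton] at ht; subst ht; exact h
  · intro t ht t' ht' hne
    rw [Finset.mem_singleton] at ht ht'
    exact absurd (ht.trans ht'.symm) hne

lemma mt1 {a b c : V} : MatchedTo ({(a, b, c)} : Finset (V × V × V)) a b :=
  ⟨(a, b, c), Finset.mem_singleton_self _, Or.inl ⟨rfl, rfl⟩⟩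

lemma mt2 {a b c : V} : MatchedTo ({(a, b, c)} : Finset (V × V × V)) b c :=
  ⟨(a, b, c), Finset.mem_singleton_self _, Or.inr (Or.inl ⟨rfl, rfl⟩)⟩

lemma mt3 {a b c : V} : MatchedTo ({(a, b, c)} : Finset (V × V × V)) c a :=
  ⟨(a, b, c), Finset.mem_singleton_self _, Or.inr (Or.inr ⟨rfl, rfl⟩)⟩

/-! ### Dimension 1 -/

lemma gender_inj (G : TDSMI V 1) {u w : V} (h : G.gender u = G.gender w) : u = w := by
  have hcard := G.gender_card (G.gender w)
  have hu : u ∈ Finset.univ.filter fun v => G.gender v = G.gender w := by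
    simp [h]
  have hw : w ∈ Finset.univ.filter fun v => G.gender v = G.gender w := by
    simp
  exact Finset.card_le_one.mp (le_of_eq hcard) u hu w hw

lemma n1_stable (G : TDSMI V 1) : ∃ F : Finset (V × V × V), G.IsMatching F ∧ G.WeaklyStable F := by
  by_cases hfam : ∃ a b c, G.IsFamily a b c
  · obtain ⟨a, b, c, h⟩ := hfam
    refine ⟨{(a, b, c)}, isMatching_singleton h, ?_⟩
    rintro x y z ⟨hT, p1, p2, p3⟩
    have gb : G.gender b = G.gender a + 1 := G.edge_gender _ _ h.1
    have gc : G.gender c = G.gender b + 1 := G.edge_gender _ _ h.2.1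
    have ga' : G.gender a = G.gender c + 1 := G.edge_gender _ _ h.2.2
    have gy : G.gender y = G.gender x + 1 := G.edge_gender _ _ hT.1
    rcases fin3_cases (G.gender x) (G.gender a) with hx | hx | hx
    · have hxa : x = a := G.gender_inj hx
      have hyb : y = b := G.gender_inj (by rw [gy, hx, ← gb])
      subst hxa; subst hyb
      exact absurd (p1 _ mt1) (lt_irrefl _)
    · have hxb : x = b := G.gender_inj (by rw [hx, ← gb])
      have hyc : y = c := G.gender_inj (by rw [gy, hx, ← gb, ← gc])
      subst hxb; subst hyc
      exact absurd (p1 _ mt2) (lt_irrefl _)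
    · have hxc : x = c := G.gender_inj (by rw [hx, ← gb, ← gc])
      have hya : y = a := G.gender_inj (by rw [gy, hx, ← gb, ← gc, ← ga'])
      subst hxc; subst hya
      exact absurd (p1 _ mt3) (lt_irrefl _)
  · exact ⟨∅, G.stable_of_no_family hfam⟩

/-! ### Dimension 0 -/

lemma n0_stable (G : TDSMI V 0) : ∃ F : Finset (V × V × V), G.IsMatching F ∧ G.WeaklyStable F := by
  refine ⟨∅, G.stable_of_no_family ?_⟩
  rintro ⟨a, b, c, -⟩
  have hcard := G.gender_card (G.gender a)
  have ha : a ∈ Finset.univ.filter fun v => G.gender v = G.gender a := by simp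
  rw [Finset.card_eq_zero.mp hcard] at ha
  exact absurd ha (Finset.notMem_empty a)

end TDSMI

namespace TDSMI

variable {V : Type} [Fintype V] [DecidableEq V]

/-! ### Dimension 2 : the complement vertex -/

lemma exists_co (G : TDSMI V 2) (v : V) :
    ∃ u, u ≠ v ∧ G.gender u = G.gender v ∧
      ∀ x, G.gender x = G.gender v → x = v ∨ x = u := by
  classical
  set s := Finset.univ.filter (fun x => G.gender x = G.gender v) with hs
  have hv : v ∈ s := by simp [hs]
  have hcard : s.card = 2 := G.gender_card _
  have h1 : (s.erase v).card = 1 := by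
    rw [Finset.card_erase_of_mem hv, hcard]
  obtain ⟨u, hu⟩ := Finset.card_eq_one.mp h1
  have hum : u ∈ s.erase v := hu ▸ Finset.mem_singleton_self u
  refine ⟨u, (Finset.mem_erase.mp hum).1, ?_, ?_⟩
  · have := (Finset.mem_erase.mp hum).2
    rw [hs, Finset.mem_filter] at this
    exact this.2
  · intro x hx
    by_cases hxv : x = v
    · exact Or.inl hxv
    · have : x ∈ s.erase v := by
        rw [Finset.mem_erase, hs, Finset.mem_filter]
        exact ⟨hxv, Finset.mem_univ x, hx⟩
      rw [hu, Finset.mem_singleton] at this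
      exact Or.inr this

noncomputable def co (G : TDSMI V 2) (v : V) : V := (G.exists_co v).choose

lemma co_ne (G : TDSMI V 2) (v : V) : G.co v ≠ v := (G.exists_co v).choose_spec.1

lemma gender_co (G : TDSMI V 2) (v : V) : G.gender (G.co v) = G.gender v :=
  (G.exists_co v).choose_spec.2.1

lemma eq_or_co (G : TDSMI V 2) {x v : V} (h : G.gender x = G.gender v) :
    x = v ∨ x = G.co v := (G.exists_co v).choose_spec.2.2 x h

lemma co_co (G : TDSMI V 2) (v : V) : G.co (G.co v) = v := by
  rcases G.eq_or_co (G.gender_co v).symm with h | h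
  · exact absurd h.symm (G.co_ne v)
  · exact h.symm

/-! ### Rank bounds for dimension 2 -/

lemma rank_bounds (G : TDSMI V 2) {v w : V} (h : G.E v w) :
    1 ≤ G.r v w ∧ G.r v w ≤ 2 := by
  have hw : w ∈ Finset.univ.filter fun u => G.E v u := by simp [h]
  have hmem : G.r v w ∈ Finset.Icc 1 (Finset.univ.filter fun u => G.E v u).card := by
    rw [← G.rank_bij v]
    exact Finset.mem_image_of_mem _ hw
  rw [Finset.mem_Icc] at hmem
  have hsub : (Finset.univ.filter fun u => G.E v u) ⊆
      Finset.univ.filter fun u => G.gender u = G.gender v + 1 := by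
    intro u hu
    rw [Finset.mem_filter] at hu ⊢
    exact ⟨hu.1, G.edge_gender v u hu.2⟩
  have hle : (Finset.univ.filter fun u => G.E v u).card ≤ 2 := by
    calc (Finset.univ.filter fun u => G.E v u).card
        ≤ (Finset.univ.filter fun u => G.gender u = G.gender v + 1).card :=
          Finset.card_le_card hsub
      _ = 2 := G.gender_card _
  omega

lemma rank_lt (G : TDSMI V 2) {v w u : V} (hw : G.E v w) (hu : G.E v u)
    (hlt : G.r v w < G.r v u) : G.r v u = 2 ∧ G.r v w = 1 := by
  have h1 := G.rank_bounds hw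
  have h2 := G.rank_bounds hu
  omega

/-! ### Head-block predicate and the block classification -/

/-- `(a,b,c)` is a family whose singleton matching is blocked with pivot at `a`. -/
def HB (G : TDSMI V 2) (a b c : V) : Prop :=
  G.IsFamily a (G.co b) (G.co c) ∧ G.r a b = 2 ∧ G.r a (G.co b) = 1

lemma aligned (G : TDSMI V 2) {F : Finset (V × V × V)} {a b c x y z : V}
    (hfam : G.IsFamily a b c) (hT : G.IsFamily x y z)
    (hx : G.gender x = G.gender a)
    (p1 : G.Prefers F x y) (p2 : G.Prefers F y z) (p3 : G.Prefers F z x)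
    (m1 : MatchedTo F a b) (m2 : MatchedTo F b c) (m3 : MatchedTo F c a) :
    G.IsFamily (G.co a) (G.co b) (G.co c) ∨ G.HB a b c ∨ G.HB b c a ∨ G.HB c a b := by
  have gb : G.gender b = G.gender a + 1 := G.edge_gender _ _ hfam.1
  have gc : G.gender c = G.gender b + 1 := G.edge_gender _ _ hfam.2.1
  have gy : G.gender y = G.gender x + 1 := G.edge_gender _ _ hT.1
  have gz : G.gender z = G.gender y + 1 := G.edge_gender _ _ hT.2.1
  have hxa : x = a ∨ x = G.co a := G.eq_or_co hx
  have hyb : y = b ∨ y = G.co b := G.eq_or_co (by rw [gy, hx, ← gb])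
  have hzc : z = c ∨ z = G.co c := G.eq_or_co (by rw [gz, gy, hx, ← gb, ← gc])
  rcases hxa with rfl | rfl
  · rcases hyb with rfl | rfl
    · exact absurd (p1 _ m1) (lt_irrefl _)
    · rcases hzc with rfl | rfl
      · exact absurd (p3 _ m3) (lt_irrefl _)
      · refine Or.inr (Or.inl ⟨hT, ?_⟩)
        have := G.rank_lt hT.1 hfam.1 (p1 _ m1)
        exact ⟨this.1, this.2⟩
  · rcases hyb with rfl | rfl
    · rcases hzc with rfl | rfl
      · exact absurd (p2 _ m2) (lt_irrefl _)
      · refine Or.inr (Or.inr (Or.inl ⟨hT.rot, ?_⟩))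
        have := G.rank_lt hT.2.1 hfam.2.1 (p2 _ m2)
        exact ⟨this.1, this.2⟩
    · rcases hzc with rfl | rfl
      · refine Or.inr (Or.inr (Or.inr ⟨hT.rot.rot, ?_⟩))
        have := G.rank_lt hT.2.2 hfam.2.2 (p3 _ m3)
        exact ⟨this.1, this.2⟩
      · exact Or.inl hT

lemma block_cases (G : TDSMI V 2) {a b c x y z : V}
    (hfam : G.IsFamily a b c)
    (hb : G.Blocks ({(a, b, c)} : Finset (V × V × V)) x y z) :
    G.IsFamily (G.co a) (G.co b) (G.co c) ∨ G.HB a b c ∨ G.HB b c a ∨ G.HB c a b := by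
  obtain ⟨hT, p1, p2, p3⟩ := hb
  have gy : G.gender y = G.gender x + 1 := G.edge_gender _ _ hT.1
  have gz : G.gender z = G.gender y + 1 := G.edge_gender _ _ hT.2.1
  rcases fin3_cases (G.gender x) (G.gender a) with h | h | h
  · exact G.aligned hfam hT h p1 p2 p3 mt1 mt2 mt3
  · have hz : G.gender z = G.gender a := by rw [gz, gy, h, fin3_add3]
    exact G.aligned hfam hT.rot.rot hz p3 p1 p2 mt1 mt2 mt3
  · have hy : G.gender y = G.gender a := by rw [gy, h, fin3_add3]
    exact G.aligned hfam hT.rot hy p2 p3 p1 mt1 mt2 mt3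

end TDSMI

namespace TDSMI

set_option linter.unusedSectionVars false

variable {V : Type} [Fintype V] [DecidableEq V]

private lemma ne_of_g {n : ℕ} {G : TDSMI V n} {u w : V}
    (h : G.gender u ≠ G.gender w) : u ≠ w := fun he => h (by rw [he])

/-! ### Case I : a pair of complementary families gives a stable perfect matching -/

lemma pair_stable (G : TDSMI V 2) {a b c : V} (h1 : G.IsFamily a b c)
    (h2 : G.IsFamily (G.co a) (G.co b) (G.co c)) :
    ∃ F : Finset (V × V × V), G.IsMatching F ∧ G.WeaklyStable F := by
  classical
  have hgb : G.gender b = G.gender a + 1 := G.edge_gender _ _ h1.1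
  have hgc : G.gender c = G.gender a + 1 + 1 := by
    rw [G.edge_gender _ _ h1.2.1, hgb]
  set A := G.co a with hA
  set B := G.co b with hB
  set C := G.co c with hC
  have gA : G.gender A = G.gender a := G.gender_co a
  have gB : G.gender B = G.gender b := G.gender_co b
  have gC : G.gender C = G.gender c := G.gender_co c
  have coA : G.co A = a := by rw [hA, G.co_co]
  have coB : G.co B = b := by rw [hB, G.co_co]
  have coC : G.co C = c := by rw [hC, G.co_co]
  have gne1 : G.gender a ≠ G.gender b := by
    rw [hgb]; exact fun hh => fin3_ne1 _ hh.symm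
  have gne2 : G.gender a ≠ G.gender c := by
    rw [hgc]; exact fun hh => fin3_ne2 _ hh.symm
  have gne3 : G.gender b ≠ G.gender c := by
    rw [hgb, hgc]; exact fun hh => fin3_ne1 _ hh.symm
  have n1 : a ≠ A := (G.co_ne a).symm
  have n2 : b ≠ B := (G.co_ne b).symm
  have n3 : c ≠ C := (G.co_ne c).symm
  have nab : a ≠ B := ne_of_g (by rw [gB]; exact gne1)
  have nac : a ≠ C := ne_of_g (by rw [gC]; exact gne2)
  have nba : b ≠ A := ne_of_g (by rw [gA]; exact gne1.symm)
  have nbc : b ≠ C := ne_of_g (by rw [gC]; exact gne3)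
  have nca : c ≠ A := ne_of_g (by rw [gA]; exact gne2.symm)
  have ncb : c ≠ B := ne_of_g (by rw [gB]; exact gne3.symm)
  set F : Finset (V × V × V) := {(a, b, c), (A, B, C)} with hF
  have hm1 : (a, b, c) ∈ F := Finset.mem_insert_self _ _
  have hm2 : (A, B, C) ∈ F := Finset.mem_insert_of_mem (Finset.mem_singleton_self _)
  have M1 : MatchedTo F a b := ⟨(a, b, c), hm1, Or.inl ⟨rfl, rfl⟩⟩
  have M2 : MatchedTo F b c := ⟨(a, b, c), hm1, Or.inr (Or.inl ⟨rfl, rfl⟩)⟩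
  have M3 : MatchedTo F c a := ⟨(a, b, c), hm1, Or.inr (Or.inr ⟨rfl, rfl⟩)⟩
  have M4 : MatchedTo F A B := ⟨(A, B, C), hm2, Or.inl ⟨rfl, rfl⟩⟩
  have M5 : MatchedTo F B C := ⟨(A, B, C), hm2, Or.inr (Or.inl ⟨rfl, rfl⟩)⟩
  have M6 : MatchedTo F C A := ⟨(A, B, C), hm2, Or.inr (Or.inr ⟨rfl, rfl⟩)⟩
  have hdisj : ∀ v : V, ¬ (MemTriple v (a, b, c) ∧ MemTriple v (A, B, C)) := by
    rintro v ⟨hv1, hv2⟩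
    simp only [MemTriple] at hv1 hv2
    rcases hv1 with h | h | h <;> rcases hv2 with h' | h' | h'
    · exact n1 (h.symm.trans h')
    · exact nab (h.symm.trans h')
    · exact nac (h.symm.trans h')
    · exact nba (h.symm.trans h')
    · exact n2 (h.symm.trans h')
    · exact nbc (h.symm.trans h')
    · exact nca (h.symm.trans h')
    · exact ncb (h.symm.trans h')
    · exact n3 (h.symm.trans h')
  refine ⟨F, ⟨?_, ?_⟩, ?_⟩
  · intro t ht
    rw [hF, Finset.mem_insert, Finset.mem_singleton] at ht
    rcases ht with rfl | rfl
    · exact h1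
    · exact h2
  · intro t ht t' ht' hne v hv
    rw [hF, Finset.mem_insert, Finset.mem_singleton] at ht ht'
    rcases ht with rfl | rfl <;> rcases ht' with rfl | rfl
    · exact hne rfl
    · exact hdisj v hv
    · exact hdisj v ⟨hv.2, hv.1⟩
    · exact hne rfl
  · rintro x y z ⟨hT, p1, p2, p3⟩
    have gy : G.gender y = G.gender x + 1 := G.edge_gender _ _ hT.1
    have gz : G.gender z = G.gender y + 1 := G.edge_gender _ _ hT.2.1
    have step : ∀ v p u : V, MatchedTo F v p → G.Prefers F v u →
        G.gender u = G.gender p → u = G.co p := by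
      intro v p u hm hp hg
      rcases G.eq_or_co hg with h | h
      · rw [h] at hp
        exact absurd (hp _ hm) (lt_irrefl _)
      · exact h
    have chain : ∀ x1 y1 z1 : V, G.Prefers F x1 y1 → G.Prefers F y1 z1 →
        G.Prefers F z1 x1 → G.gender x1 = G.gender a → G.gender y1 = G.gender b →
        G.gender z1 = G.gender c → False := by
      intro x1 y1 z1 q1 q2 q3 g1 g2 g3
      rcases G.eq_or_co g1 with h | h
      · rw [h] at q1 q3
        have hy1 : y1 = B := by rw [hB]; exact step a b y1 M1 q1 g2
        rw [hy1] at q2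
        have hz1 : z1 = c := by
          have := step B C z1 M5 q2 (by rw [g3]; exact gC.symm)
          rwa [coC] at this
        rw [hz1] at q3
        exact absurd (q3 _ M3) (lt_irrefl _)
      · rw [h, ← hA] at q1 q3
        have hy1 : y1 = b := by
          have := step A B y1 M4 q1 (by rw [g2]; exact gB.symm)
          rwa [coB] at this
        rw [hy1] at q2
        have hz1 : z1 = C := by rw [hC]; exact step b c z1 M2 q2 g3
        rw [hz1] at q3
        exact absurd (q3 _ M6) (lt_irrefl _)
    rcases fin3_cases (G.gender x) (G.gender a) with h | h | h
    · exact chain x y z p1 p2 p3 h (by rw [gy, h, ← hgb]) (by rw [gz, gy, h]; exact hgc.symm)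
    · exact chain z x y p3 p1 p2 (by rw [gz, gy, h, fin3_add3]) (by rw [h]; exact hgb.symm)
        (by rw [gy, h]; exact hgc.symm)
    · exact chain y z x p2 p3 p1 (by rw [gy, h, fin3_add3])
        (by rw [gz, gy, h, fin3_add3]; exact hgb.symm) (by rw [h]; exact hgc.symm)

/-! ### Case II : no complementary pair; some family is unblocked -/

lemma no_block_family (G : TDSMI V 2)
    (hanti : ¬ ∃ p q s, G.IsFamily p q s ∧ G.IsFamily (G.co p) (G.co q) (G.co s))
    (hbl : ∀ p q s, G.IsFamily p q s →
      ∃ x y z, G.Blocks ({(p, q, s)} : Finset (V × V × V)) x y z)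
    {a b c : V} (h1 : G.IsFamily a b c) : False := by
  have getHB : ∀ p q s, G.IsFamily p q s → G.HB p q s ∨ G.HB q s p ∨ G.HB s p q := by
    intro p q s hf
    obtain ⟨x, y, z, hb⟩ := hbl p q s hf
    rcases G.block_cases hf hb with h | h
    · exact absurd ⟨p, q, s, hf, h⟩ hanti
    · exact h
  have core : ∀ a b c : V, G.IsFamily a b c → G.HB a b c → False := by
    clear h1 a b c
    intro a b c h1 hb
    obtain ⟨hΔ2, hrab, hrab'⟩ := hb
    have Qcase : G.IsFamily a (G.co b) c → False := by
      intro hQ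
      rcases getHB _ _ _ hQ with ⟨h, h2, _⟩ | ⟨h, _, _⟩ | ⟨h, _, _⟩
      · omega
      · exact hanti ⟨a, b, c, h1, h.rot.rot⟩
      · rw [G.co_co] at h
        exact hanti ⟨a, G.co b, G.co c, hΔ2, by rw [G.co_co, G.co_co]; exact h.rot⟩
    rcases getHB _ _ _ hΔ2 with ⟨h, h2, _⟩ | ⟨h, h2, h3⟩ | ⟨h, h2, h3⟩
    · omega
    · rw [G.co_co] at h
      exact Qcase ⟨hΔ2.1, h.1, h1.2.2⟩
    · rw [G.co_co] at h
      rcases getHB _ _ _ h with ⟨h4, h5, _⟩ | ⟨h4, h5, h6⟩ | ⟨h4, h5, h6⟩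
      · omega
      · rw [G.co_co] at h4
        exact Qcase ⟨hΔ2.1, h4.2.1, h1.2.2⟩
      · rw [G.co_co, G.co_co] at h4
        have hR : G.IsFamily a b (G.co c) := ⟨h1.1, h.2.2, hΔ2.2.2⟩
        rcases getHB _ _ _ hR with ⟨h7, _, _⟩ | ⟨h7, _, _⟩ | ⟨h7, _, _⟩
        · rw [G.co_co] at h7
          exact Qcase h7
        · rw [G.co_co] at h7
          exact hanti ⟨a, G.co b, G.co c, hΔ2, by rw [G.co_co, G.co_co]; exact h7.rot.rot⟩
        · exact hanti ⟨a, b, c, h1, h7.rot⟩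
  rcases getHB a b c h1 with h | h | h
  · exact core a b c h1 h
  · exact core b c a h1.rot h
  · exact core c a b h1.rot.rot h

/-! ### Dimension 2, main result -/

lemma n2_stable (G : TDSMI V 2) :
    ∃ F : Finset (V × V × V), G.IsMatching F ∧ G.WeaklyStable F := by
  by_cases hfam : ∃ a b c, G.IsFamily a b c
  · obtain ⟨a, b, c, h1⟩ := hfam
    by_cases hanti : ∃ p q s, G.IsFamily p q s ∧ G.IsFamily (G.co p) (G.co q) (G.co s)
    · obtain ⟨p, q, s, hf, hf'⟩ := hanti
      exact G.pair_stable hf hf'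
    · by_cases hst : ∃ p q s, G.IsFamily p q s ∧
        ∀ x y z, ¬ G.Blocks ({(p, q, s)} : Finset (V × V × V)) x y z
      · obtain ⟨p, q, s, hf, hstab⟩ := hst
        exact ⟨{(p, q, s)}, isMatching_singleton hf, fun x y z => hstab x y z⟩
      · exfalso
        push_neg at hst
        exact G.no_block_family hanti (fun p q s hf => hst p q s hf) h1
  · exact ⟨∅, G.stable_of_no_family hfam⟩

end TDSMI

/-- Every 3DSMI instance of dimension `n ≤ 2` has a weakly stable matching. -/
theorem stmt_0 {V : Type} [Fintype V] [DecidableEq V] {n : ℕ} (hn : n ≤ 2)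
    (G : TDSMI V n) :
    ∃ F : Finset (V × V × V), G.IsMatching F ∧ G.WeaklyStable F := by
  interval_cases n
  · exact G.n0_stable
  · exact G.n1_stable
  · exact G.n2_stable
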